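/- Let (T, φ) be a quasi-Sturmian coloring. If for some n > N₀ the factor graph G_n contains two distinct vertices each of degree at least three, then the coloring is of bounded type. -/

import Mathlib

open SimpleGraph

variable {V A : Type*}

/-- Equivalence of colored `n`-balls: a color-preserving isometry between the balls
of radius `n` centered at `u` and `v`, sending `u` to `v`. -/
def BallEquiv (G : SimpleGraph V) (φ : V → A) (n : ℕ) (u v : V) : Prop :=
  ∃ f : V → V, f u = v ∧
    (∀ x y : V, G.dist u x ≤ n → G.dist u y ≤ n → G.dist (f x) (f y) = G.dist x y) ∧
    (∀ x : V, G.dist u x ≤ n → φ (f x) = φ x) ∧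
    (∀ z : V, G.dist v z ≤ n → ∃ x : V, G.dist u x ≤ n ∧ f x = z)

/-- The factor complexity `b(n)`: the number of classes of colored `n`-balls. -/
noncomputable def complexity (G : SimpleGraph V) (φ : V → A) (n : ℕ) : ℕ :=
  Nat.card (Quot (BallEquiv G φ n))

/-- The colored `n`-ball at `u` is special: it admits two inequivalent `(n+1)`-extensions. -/
def IsSpecialCenter (G : SimpleGraph V) (φ : V → A) (n : ℕ) (u : V) : Prop :=
  ∃ v, BallEquiv G φ n u v ∧ ¬ BallEquiv G φ (n+1) u v

/-- The type set `Λ_u` of a vertex. -/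
def typeSet (G : SimpleGraph V) (φ : V → A) (u : V) : Set ℕ :=
  {n | IsSpecialCenter G φ n u}

/-- Two vertices are in the same class: their colored `n`-balls agree for all `n`. -/
def SameClass (G : SimpleGraph V) (φ : V → A) (u v : V) : Prop :=
  ∀ n, BallEquiv G φ n u v

/-- `m` is the maximal type of `u`. -/
def MaxType (G : SimpleGraph V) (φ : V → A) (u : V) (m : ℕ) : Prop :=
  m ∈ typeSet G φ u ∧ ∀ k ∈ typeSet G φ u, k ≤ m

/-- Weak adjacency of classes of colored `n`-balls (given by representatives `x`, `y`). -/
def WeakAdj (G : SimpleGraph V) (φ : V → A) (n : ℕ) (x y : V) : Prop :=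
  ∃ v w, G.Adj v w ∧ BallEquiv G φ n x v ∧ BallEquiv G φ n y w

/-- Strong adjacency: every ball of the class of `x` has a neighboring ball of the class of `y`. -/
def StrongAdj (G : SimpleGraph V) (φ : V → A) (n : ℕ) (x y : V) : Prop :=
  ∀ v, BallEquiv G φ n x v → ∃ w, G.Adj v w ∧ BallEquiv G φ n y w

/-- The factor graph `𝒢ₙ` on classes of colored `n`-balls. -/
def FactorGraph (G : SimpleGraph V) (φ : V → A) (n : ℕ) :
    SimpleGraph (Quot (BallEquiv G φ n)) where
  Adj a b := a ≠ b ∧ ∃ u v, G.Adj u v ∧ Quot.mk _ u = a ∧ Quot.mk _ v = b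
  symm := ⟨by rintro a b ⟨hne, u, v, h, hu, hv⟩; exact ⟨hne.symm, v, u, h.symm, hv, hu⟩⟩
  loopless := ⟨by rintro a ⟨hne, _⟩; exact hne rfl⟩

/-- The quotient graph `X = Γ\T` on classes of vertices. -/
def QuotGraph (G : SimpleGraph V) (φ : V → A) :
    SimpleGraph (Quot (SameClass G φ)) where
  Adj a b := a ≠ b ∧ ∃ u v, G.Adj u v ∧ Quot.mk _ u = a ∧ Quot.mk _ v = b
  symm := ⟨by rintro a b ⟨hne, u, v, h, hu, hv⟩; exact ⟨hne.symm, v, u, h.symm, hv, hu⟩⟩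
  loopless := ⟨by rintro a ⟨hne, _⟩; exact hne rfl⟩


section Aux

variable {G : SimpleGraph V} {φ : V → A}

private lemma dist_self_le {u : V} {n : ℕ} : G.dist u u ≤ n := by
  simp [SimpleGraph.dist_self]

lemma be_refl (G : SimpleGraph V) (φ : V → A) (n : ℕ) (u : V) : BallEquiv G φ n u u :=
  ⟨id, rfl, fun _ _ _ _ => rfl, fun _ _ => rfl, fun z hz => ⟨z, hz, rfl⟩⟩

lemma be_mono {m k : ℕ} (hkm : k ≤ m) {u v : V}
    (h : BallEquiv G φ m u v) : BallEquiv G φ k u v := by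
  obtain ⟨f, hfu, hdist, hcol, hsurj⟩ := h
  refine ⟨f, hfu, fun x y hx hy => hdist x y (hx.trans hkm) (hy.trans hkm),
    fun x hx => hcol x (hx.trans hkm), fun z hz => ?_⟩
  obtain ⟨x, hx, hfx⟩ := hsurj z (hz.trans hkm)
  refine ⟨x, ?_, hfx⟩
  have h2 := hdist u x dist_self_le hx
  rw [hfu, hfx] at h2
  omega

private lemma be_injOn (hconn : G.Connected) {n : ℕ} {u : V} {f : V → V}
    (hdist : ∀ x y : V, G.dist u x ≤ n → G.dist u y ≤ n → G.dist (f x) (f y) = G.dist x y)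
    {x y : V} (hx : G.dist u x ≤ n) (hy : G.dist u y ≤ n) (hf : f x = f y) : x = y := by
  have h2 := hdist x y hx hy
  rw [hf, SimpleGraph.dist_self] at h2
  exact hconn.dist_eq_zero_iff.mp h2.symm

lemma be_symm (hconn : G.Connected) {n : ℕ} {u v : V}
    (h : BallEquiv G φ n u v) : BallEquiv G φ n v u := by
  classical
  obtain ⟨f, hfu, hdist, hcol, hsurj⟩ := h
  have hball : ∀ x, G.dist u x ≤ n → G.dist v (f x) ≤ n := by
    intro x hx
    have h2 := hdist u x dist_self_le hx
    rw [hfu] at h2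
    omega
  set g : V → V := fun z => if h : ∃ x, G.dist u x ≤ n ∧ f x = z then h.choose else u with hg
  have hgspec : ∀ z, G.dist v z ≤ n → G.dist u (g z) ≤ n ∧ f (g z) = z := by
    intro z hz
    have hex := hsurj z hz
    rw [hg]
    simp only [dif_pos hex]
    exact hex.choose_spec
  refine ⟨g, ?_, ?_, ?_, ?_⟩
  · obtain ⟨h1, h2⟩ := hgspec v dist_self_le
    exact be_injOn hconn hdist h1 dist_self_le (by rw [h2, hfu])
  · intro x y hx hy
    obtain ⟨hx1, hx2⟩ := hgspec x hx
    obtain ⟨hy1, hy2⟩ := hgspec y hy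
    have h2 := hdist _ _ hx1 hy1
    rw [hx2, hy2] at h2
    omega
  · intro x hx
    obtain ⟨hx1, hx2⟩ := hgspec x hx
    have h2 := hcol _ hx1
    rw [hx2] at h2
    exact h2.symm
  · intro z hz
    refine ⟨f z, hball z hz, ?_⟩
    obtain ⟨h1, h2⟩ := hgspec (f z) (hball z hz)
    exact be_injOn hconn hdist h1 hz h2

lemma be_trans {n : ℕ} {u v w : V}
    (h1 : BallEquiv G φ n u v) (h2 : BallEquiv G φ n v w) : BallEquiv G φ n u w := by
  obtain ⟨f, hfu, hdf, hcf, hsf⟩ := h1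
  obtain ⟨g, hgv, hdg, hcg, hsg⟩ := h2
  have hball : ∀ x, G.dist u x ≤ n → G.dist v (f x) ≤ n := by
    intro x hx
    have h3 := hdf u x dist_self_le hx
    rw [hfu] at h3
    omega
  refine ⟨g ∘ f, by simp [hfu, hgv], ?_, ?_, ?_⟩
  · intro x y hx hy
    have h3 := hdg (f x) (f y) (hball x hx) (hball y hy)
    simp only [Function.comp_apply]
    rw [h3]
    exact hdf x y hx hy
  · intro x hx
    simp only [Function.comp_apply]
    rw [hcg (f x) (hball x hx)]
    exact hcf x hx
  · intro z hz
    obtain ⟨yy, hy1, hy2⟩ := hsg z hz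
    obtain ⟨x, hx1, hx2⟩ := hsf yy hy1
    exact ⟨x, hx1, by simp [Function.comp_apply, hx2, hy2]⟩

lemma be_equivalence (hconn : G.Connected) (n : ℕ) : Equivalence (BallEquiv G φ n) :=
  ⟨be_refl G φ n, be_symm hconn, be_trans⟩

private lemma quot_mk_eq_iff (hconn : G.Connected) (n : ℕ) (a b : V) :
    (Quot.mk (BallEquiv G φ n) a = Quot.mk (BallEquiv G φ n) b) ↔ BallEquiv G φ n a b := by
  rw [Quot.eq]
  exact (be_equivalence hconn n).eqvGen_iff

/-- Transfer of ball equivalence at radius `k+1` to neighbors at radius `k`, along a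
realizing map. -/
private lemma be_step (hconn : G.Connected) {k : ℕ} {u v : V} {f : V → V}
    (hfu : f u = v)
    (hdist : ∀ x y, G.dist u x ≤ k+1 → G.dist u y ≤ k+1 → G.dist (f x) (f y) = G.dist x y)
    (hcol : ∀ x, G.dist u x ≤ k+1 → φ (f x) = φ x)
    (hsurj : ∀ z, G.dist v z ≤ k+1 → ∃ x, G.dist u x ≤ k+1 ∧ f x = z)
    {t : V} (ht : G.Adj u t) :
    G.Adj v (f t) ∧ BallEquiv G φ k t (f t) := by
  have hut : G.dist u t = 1 := dist_eq_one_iff_adj.mpr ht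
  have ht1 : G.dist u t ≤ k+1 := by omega
  have hvft : G.dist v (f t) = 1 := by
    have h2 := hdist u t dist_self_le ht1
    rw [hfu] at h2
    omega
  have hadj : G.Adj v (f t) := dist_eq_one_iff_adj.mp hvft
  have hballt : ∀ x, G.dist t x ≤ k → G.dist u x ≤ k+1 := by
    intro x hx
    have h3 : G.dist u x ≤ G.dist u t + G.dist t x := hconn.dist_triangle
    omega
  refine ⟨hadj, f, rfl, ?_, ?_, ?_⟩
  · intro x y hx hy
    exact hdist x y (hballt x hx) (hballt y hy)
  · intro x hx
    exact hcol x (hballt x hx)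
  · intro z hz
    have hvz : G.dist v z ≤ k+1 := by
      have h3 : G.dist v z ≤ G.dist v (f t) + G.dist (f t) z := hconn.dist_triangle
      omega
    obtain ⟨x, hx, hfx⟩ := hsurj z hvz
    refine ⟨x, ?_, hfx⟩
    have h3 := hdist t x ht1 hx
    rw [hfx] at h3
    omega

/-- Neighbor transfer: if `B_{k+1}(u) ≡ B_{k+1}(v)` and `t` is a neighbor of `u`, then `v`
has a neighbor whose `k`-ball is equivalent to that of `t`. -/
lemma be_adj_transfer (hconn : G.Connected) {k : ℕ} {u v : V}
    (h : BallEquiv G φ (k+1) u v) {t : V} (ht : G.Adj u t) :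
    ∃ t', G.Adj v t' ∧ BallEquiv G φ k t t' := by
  obtain ⟨f, hfu, hdist, hcol, hsurj⟩ := h
  obtain ⟨h1, h2⟩ := be_step hconn hfu hdist hcol hsurj ht
  exact ⟨f t, h1, h2⟩

/-- Surjective neighbor transfer in a `d`-regular locally finite graph. -/
lemma be_adj_surj [G.LocallyFinite] (hconn : G.Connected) {d : ℕ}
    (hreg : ∀ v : V, G.degree v = d) {k : ℕ} {u v : V}
    (h : BallEquiv G φ (k+1) u v) {z : V} (hz : G.Adj v z) :
    ∃ t, G.Adj u t ∧ BallEquiv G φ k t z := by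
  classical
  obtain ⟨f, hfu, hdist, hcol, hsurj⟩ := h
  have hstep : ∀ t, G.Adj u t → G.Adj v (f t) ∧ BallEquiv G φ k t (f t) :=
    fun t ht => be_step hconn hfu hdist hcol hsurj ht
  have himg : (G.neighborFinset u).image f ⊆ G.neighborFinset v := by
    intro z' hz'
    simp only [Finset.mem_image, mem_neighborFinset] at hz' ⊢
    obtain ⟨t, ht, rfl⟩ := hz'
    exact (hstep t ht).1
  have hinj : Set.InjOn f (G.neighborFinset u) := by
    intro p hp q hq hpq
    simp only [Finset.coe_sort_coe, Finset.mem_coe, mem_neighborFinset] at hp hq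
    have hp1 : G.dist u p ≤ k+1 := by
      have := dist_eq_one_iff_adj.mpr hp
      omega
    have hq1 : G.dist u q ≤ k+1 := by
      have := dist_eq_one_iff_adj.mpr hq
      omega
    exact be_injOn hconn hdist hp1 hq1 hpq
  have hcard : ((G.neighborFinset u).image f).card = d := by
    rw [Finset.card_image_of_injOn hinj, card_neighborFinset_eq_degree, hreg]
  have heq : (G.neighborFinset u).image f = G.neighborFinset v := by
    refine Finset.eq_of_subset_of_card_le himg ?_
    rw [hcard, card_neighborFinset_eq_degree, hreg]
  have hzmem : z ∈ (G.neighborFinset u).image f := by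
    rw [heq, mem_neighborFinset]
    exact hz
  obtain ⟨t, ht, hft⟩ := Finset.mem_image.mp hzmem
  rw [mem_neighborFinset] at ht
  refine ⟨t, ht, ?_⟩
  have h2 := (hstep t ht).2
  rwa [hft] at h2

lemma nonspecial_step {n : ℕ} {u : V} (h : ¬ IsSpecialCenter G φ n u) :
    ∀ v, BallEquiv G φ n u v → BallEquiv G φ (n+1) u v := by
  intro v hv
  by_contra hc
  exact h ⟨v, hv, hc⟩

/-- Uniqueness of the special class at each level `k ≥ N₀` (with `k + c ≥ 1`),
by counting classes. -/
lemma special_unique (hconn : G.Connected) {N₀ c : ℕ}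
    (hQS : ∀ m, N₀ ≤ m → complexity G φ m = m + c)
    {k : ℕ} (hk : N₀ ≤ k) (hk1 : 1 ≤ k + c) {u v : V}
    (hu : IsSpecialCenter G φ k u) (hv : IsSpecialCenter G φ k v) :
    BallEquiv G φ k u v := by
  classical
  by_contra huv
  obtain ⟨u', hu1, hu2⟩ := hu
  obtain ⟨v', hv1, hv2⟩ := hv
  have h0 : Nat.card (Quot (BallEquiv G φ k)) = k + c := hQS k hk
  have h1 : Nat.card (Quot (BallEquiv G φ (k+1))) = (k+1) + c :=
    hQS (k+1) (hk.trans (Nat.le_succ k))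
  haveI f0 : Finite (Quot (BallEquiv G φ k)) := Nat.finite_of_card_ne_zero (by omega)
  haveI f1 : Finite (Quot (BallEquiv G φ (k+1))) := Nat.finite_of_card_ne_zero (by omega)
  have hproj : ∀ a b : V, BallEquiv G φ (k+1) a b →
      Quot.mk (BallEquiv G φ k) a = Quot.mk (BallEquiv G φ k) b :=
    fun a b hab => Quot.sound (be_mono (Nat.le_succ k) hab)
  set π : Quot (BallEquiv G φ (k+1)) → Quot (BallEquiv G φ k) :=
    Quot.lift (Quot.mk (BallEquiv G φ k)) hproj with hπdef
  have hπ : ∀ a : V, π (Quot.mk (BallEquiv G φ (k+1)) a) = Quot.mk (BallEquiv G φ k) a :=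
    fun a => rfl
  have hπsurj : Function.Surjective π := by
    intro q
    induction q using Quot.ind with
    | _ a => exact ⟨Quot.mk _ a, rfl⟩
  set s : Quot (BallEquiv G φ k) → Quot (BallEquiv G φ (k+1)) := fun q =>
    if q = Quot.mk (BallEquiv G φ k) u then Quot.mk (BallEquiv G φ (k+1)) u
    else if q = Quot.mk (BallEquiv G φ k) v then Quot.mk (BallEquiv G φ (k+1)) v
    else Function.surjInv hπsurj q with hsdef
  have hπs : ∀ q, π (s q) = q := by
    intro q
    simp only [hsdef]
    split_ifs with hq1 hq2
    · rw [hπ]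
      exact hq1.symm
    · rw [hπ]
      exact hq2.symm
    · exact Function.surjInv_eq hπsurj q
  set F : Quot (BallEquiv G φ k) ⊕ Bool → Quot (BallEquiv G φ (k+1)) := fun q =>
    match q with
    | Sum.inl q => s q
    | Sum.inr false => Quot.mk (BallEquiv G φ (k+1)) u'
    | Sum.inr true => Quot.mk (BallEquiv G φ (k+1)) v' with hFdef
  have hsu : ∀ qa, s qa = Quot.mk (BallEquiv G φ (k+1)) u' → False := by
    intro qa hqa
    have h2 : qa = Quot.mk (BallEquiv G φ k) u' := by
      rw [← hπs qa, hqa, hπ]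
    have h3 : qa = Quot.mk (BallEquiv G φ k) u := by
      rw [h2]
      exact (quot_mk_eq_iff hconn k u' u).mpr (be_symm hconn hu1)
    rw [h3] at hqa
    simp only [hsdef, if_true] at hqa
    exact hu2 ((quot_mk_eq_iff hconn (k+1) u u').mp hqa)
  have hsv : ∀ qa, s qa = Quot.mk (BallEquiv G φ (k+1)) v' → False := by
    intro qa hqa
    have h2 : qa = Quot.mk (BallEquiv G φ k) v' := by
      rw [← hπs qa, hqa, hπ]
    have h3 : qa = Quot.mk (BallEquiv G φ k) v := by
      rw [h2]
      exact (quot_mk_eq_iff hconn k v' v).mpr (be_symm hconn hv1)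
    have h4 : ¬ (Quot.mk (BallEquiv G φ k) v = Quot.mk (BallEquiv G φ k) u) :=
      fun h5 => huv (be_symm hconn ((quot_mk_eq_iff hconn k v u).mp h5))
    rw [h3] at hqa
    simp only [hsdef, if_true] at hqa
    rw [if_neg h4] at hqa
    exact hv2 ((quot_mk_eq_iff hconn (k+1) v v').mp hqa)
  have huv' : ¬ BallEquiv G φ (k+1) u' v' := by
    intro h2
    exact huv (be_trans hu1 (be_trans (be_mono (Nat.le_succ k) h2) (be_symm hconn hv1)))
  have hFinj : Function.Injective F := by
    intro p q hpq
    match p, q with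
    | Sum.inl qa, Sum.inl qb =>
      have h2 : π (s qa) = π (s qb) := by
        simp only [hFdef] at hpq
        rw [hpq]
      rw [hπs, hπs] at h2
      rw [h2]
    | Sum.inl qa, Sum.inr false => exact absurd (hsu qa hpq) id
    | Sum.inr false, Sum.inl qb => exact absurd (hsu qb hpq.symm) id
    | Sum.inl qa, Sum.inr true => exact absurd (hsv qa hpq) id
    | Sum.inr true, Sum.inl qb => exact absurd (hsv qb hpq.symm) id
    | Sum.inr false, Sum.inr true =>
      exact absurd (huv' ((quot_mk_eq_iff hconn (k+1) u' v').mp hpq)) id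
    | Sum.inr true, Sum.inr false =>
      exact absurd (huv' ((quot_mk_eq_iff hconn (k+1) u' v').mp hpq.symm)) id
    | Sum.inr false, Sum.inr false => rfl
    | Sum.inr true, Sum.inr true => rfl
  have hcard := Nat.card_le_card_of_injective F hFinj
  rw [Nat.card_sum, h0, h1] at hcard
  simp [Nat.card_eq_fintype_card] at hcard
  omega

lemma pair_stab (G : SimpleGraph V) (φ : V → A) (a b : V) :
    ∃ M : ℕ, ∀ m, M ≤ m → BallEquiv G φ m a b → BallEquiv G φ (m+1) a b := by
  by_cases h : ∀ m, BallEquiv G φ m a b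
  · exact ⟨0, fun m _ _ => h (m+1)⟩
  · push_neg at h
    obtain ⟨K, hK⟩ := h
    exact ⟨K, fun m hm hmab => absurd (be_mono hm hmab) hK⟩

lemma nbr_stab [G.LocallyFinite] (φ : V → A) (u : V) : ∃ M : ℕ, ∀ m, M ≤ m →
    ∀ a b, G.Adj u a → G.Adj u b → BallEquiv G φ m a b → BallEquiv G φ (m+1) a b := by
  classical
  choose Mf hMf using fun (p : V × V) => pair_stab G φ p.1 p.2
  refine ⟨(G.neighborFinset u ×ˢ G.neighborFinset u).sup Mf, fun m hm a b ha hb hab => ?_⟩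
  have hmem : (a, b) ∈ G.neighborFinset u ×ˢ G.neighborFinset u := by
    simp [Finset.mem_product, mem_neighborFinset, ha, hb]
  exact hMf (a, b) m (le_trans (Finset.le_sup hmem) hm) hab

/-- Key lemma: if `w` is special at level `k+1`, a neighbor `u` of `w` is non-special at
levels `k`, `k+1`, `k+2`, and equivalences between neighbors of `u` have stabilized at
level `k+1`, we reach a contradiction. -/
lemma key_lemma [G.LocallyFinite] (hconn : G.Connected) {d : ℕ}
    (hreg : ∀ v : V, G.degree v = d) {k : ℕ} {u w : V} (hadj : G.Adj w u)
    (hsp : IsSpecialCenter G φ (k+1) w)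
    (h0 : ¬ IsSpecialCenter G φ k u) (h1 : ¬ IsSpecialCenter G φ (k+1) u)
    (h2 : ¬ IsSpecialCenter G φ (k+2) u)
    (hstab : ∀ a b, G.Adj u a → G.Adj u b →
      BallEquiv G φ (k+1) a b → BallEquiv G φ (k+2) a b) :
    False := by
  obtain ⟨z, hz1, hz2⟩ := hsp
  obtain ⟨f, hfu, hdist, hcol, hsurj⟩ := id hz1
  have hstep := be_step hconn hfu hdist hcol hsurj hadj
  have hzu' : G.Adj z (f u) := hstep.1
  have huu' : BallEquiv G φ k u (f u) := hstep.2
  have h3 : BallEquiv G φ (k+1) u (f u) := nonspecial_step h0 _ huu'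
  have h4 : BallEquiv G φ (k+2) u (f u) := nonspecial_step h1 _ h3
  have h5 : BallEquiv G φ (k+2+1) u (f u) := nonspecial_step h2 _ h4
  obtain ⟨w', hw'adj, hw'z⟩ := be_adj_surj hconn hreg h5 hzu'.symm
  have hww' : BallEquiv G φ (k+1) w w' :=
    be_trans hz1 (be_symm hconn (be_mono (by omega) hw'z))
  have h6 : BallEquiv G φ (k+2) w w' := hstab w w' hadj.symm hw'adj hww'
  exact hz2 (be_trans h6 hw'z)

lemma finite_type_adj [G.LocallyFinite] (hconn : G.Connected) {d : ℕ}
    (hreg : ∀ v : V, G.degree v = d) {u w : V} (hadj : G.Adj u w)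
    (hu : (typeSet G φ u).Finite) : (typeSet G φ w).Finite := by
  obtain ⟨M, hM⟩ := nbr_stab (G := G) φ u
  obtain ⟨b, hb⟩ := hu.bddAbove
  refine Set.Finite.subset (Set.finite_Iic (max (b+1) M + 1)) ?_
  intro m hm
  simp only [Set.mem_Iic]
  by_contra hgt
  push_neg at hgt
  obtain ⟨k, rfl⟩ : ∃ k, m = k + 1 := ⟨m - 1, by omega⟩
  have hns : ∀ j, k ≤ j → ¬ IsSpecialCenter G φ j u := by
    intro j hj hsp
    have h2 : j ≤ b := hb hsp
    omega
  exact key_lemma hconn hreg hadj.symm hm (hns k le_rfl) (hns (k+1) (by omega))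
    (hns (k+2) (by omega)) (fun a b ha hb' => hM (k+1) (by omega) a b ha hb')

lemma finite_type_walk [G.LocallyFinite] (hconn : G.Connected) {d : ℕ}
    (hreg : ∀ v : V, G.degree v = d) {u w : V} (p : G.Walk u w)
    (hu : (typeSet G φ u).Finite) : (typeSet G φ w).Finite := by
  induction p with
  | nil => exact hu
  | cons h p ih => exact ih (finite_type_adj hconn hreg h hu)

lemma strong_of_weak (hconn : G.Connected) {n : ℕ} {x a : V}
    (hns : ¬ IsSpecialCenter G φ n x) (hw : WeakAdj G φ n x a) :
    ∃ t, G.Adj x t ∧ BallEquiv G φ n t a := by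
  obtain ⟨v, w, hvw, hxv, haw⟩ := hw
  have h1 : BallEquiv G φ (n+1) x v := nonspecial_step hns v hxv
  have h2 : BallEquiv G φ (n+1) v x := be_symm hconn h1
  obtain ⟨f, hfu, hdist, hcol, hsurj⟩ := h2
  obtain ⟨h3, h4⟩ := be_step hconn hfu hdist hcol hsurj hvw
  exact ⟨f w, h3, be_trans (be_symm hconn h4) (be_symm hconn haw)⟩

lemma infinite_exists_ge {s : Set ℕ} (hs : ¬ s.Finite) (b : ℕ) : ∃ m ∈ s, b ≤ m := by
  by_contra h
  push_neg at h
  exact hs (Set.Finite.subset (Set.finite_Iic b) (fun x hx => le_of_lt (h x hx)))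

lemma main_aux [G.LocallyFinite] (hconn : G.Connected) {d : ℕ}
    (hreg : ∀ v : V, G.degree v = d)
    {N₀ c : ℕ} (hQS : ∀ m, N₀ ≤ m → complexity G φ m = m + c)
    {n : ℕ} (hn : N₀ < n)
    (hall : ∀ v : V, ¬ (typeSet G φ v).Finite)
    {p : V} (hns : ¬ IsSpecialCenter G φ n p)
    (hp : ∃ a b e : V, WeakAdj G φ n p a ∧ WeakAdj G φ n p b ∧ WeakAdj G φ n p e ∧
      ¬ BallEquiv G φ n a b ∧ ¬ BallEquiv G φ n a e ∧ ¬ BallEquiv G φ n b e ∧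
      ¬ BallEquiv G φ n p a ∧ ¬ BallEquiv G φ n p b ∧ ¬ BallEquiv G φ n p e) :
    False := by
  obtain ⟨a, b, e, hwa, hwb, hwe, hab, hae, hbe, hpa, hpb, hpe⟩ := hp
  obtain ⟨t₁, ht₁, ha₁⟩ := strong_of_weak hconn hns hwa
  obtain ⟨t₂, ht₂, ha₂⟩ := strong_of_weak hconn hns hwb
  obtain ⟨t₃, ht₃, ha₃⟩ := strong_of_weak hconn hns hwe
  have h12 : ¬ BallEquiv G φ n t₁ t₂ :=
    fun h => hab (be_trans (be_trans (be_symm hconn ha₁) h) ha₂)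
  have h13 : ¬ BallEquiv G φ n t₁ t₃ :=
    fun h => hae (be_trans (be_trans (be_symm hconn ha₁) h) ha₃)
  have h23 : ¬ BallEquiv G φ n t₂ t₃ :=
    fun h => hbe (be_trans (be_trans (be_symm hconn ha₂) h) ha₃)
  have hp1 : ¬ BallEquiv G φ n p t₁ := fun h => hpa (be_trans h ha₁)
  have hp2 : ¬ BallEquiv G φ n p t₂ := fun h => hpb (be_trans h ha₂)
  have hp3 : ¬ BallEquiv G φ n p t₃ := fun h => hpe (be_trans h ha₃)
  obtain ⟨M₁, hM₁⟩ := nbr_stab (G := G) φ t₁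
  obtain ⟨M₂, hM₂⟩ := nbr_stab (G := G) φ t₂
  obtain ⟨M₃, hM₃⟩ := nbr_stab (G := G) φ t₃
  obtain ⟨m, hmem, hmge⟩ := infinite_exists_ge (hall p)
    (max (max M₁ (max M₂ M₃)) (n+1) + 1)
  have hmn : n + 1 ≤ m := by
    have := le_max_right (max M₁ (max M₂ M₃)) (n+1)
    omega
  obtain ⟨k, rfl⟩ : ∃ k, m = k + 1 := ⟨m - 1, by omega⟩
  have hmem' : IsSpecialCenter G φ (k+1) p := hmem
  have hdi : ∀ t : V, G.Adj p t →
      (∀ a' b', G.Adj t a' → G.Adj t b' →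
        BallEquiv G φ (k+1) a' b' → BallEquiv G φ (k+2) a' b') →
      IsSpecialCenter G φ k t ∨ IsSpecialCenter G φ (k+1) t ∨
        IsSpecialCenter G φ (k+2) t := by
    intro t hadj hstab
    by_contra hc
    push_neg at hc
    exact key_lemma hconn hreg hadj hmem' hc.1 hc.2.1 hc.2.2 hstab
  have hMbound : max M₁ (max M₂ M₃) ≤ k := by
    have := le_max_left (max M₁ (max M₂ M₃)) (n+1)
    omega
  have hd₁ := hdi t₁ ht₁ (fun a' b' ha' hb' =>
    hM₁ (k+1) (by simp at hMbound; omega) a' b' ha' hb')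
  have hd₂ := hdi t₂ ht₂ (fun a' b' ha' hb' =>
    hM₂ (k+1) (by simp at hMbound; omega) a' b' ha' hb')
  have hd₃ := hdi t₃ ht₃ (fun a' b' ha' hb' =>
    hM₃ (k+1) (by simp at hMbound; omega) a' b' ha' hb')
  -- being special at level `k+1` is impossible for the `tᵢ`
  have hnk1 : ∀ t : V, ¬ BallEquiv G φ n p t → ¬ IsSpecialCenter G φ (k+1) t := by
    intro t hnt hsp
    have h2 : BallEquiv G φ (k+1) p t :=
      special_unique hconn hQS (by omega) (by omega) hmem' hsp
    exact hnt (be_mono (by omega) h2)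
  have hd₁' : IsSpecialCenter G φ k t₁ ∨ IsSpecialCenter G φ (k+2) t₁ := by
    rcases hd₁ with h | h | h
    · exact Or.inl h
    · exact absurd h (hnk1 t₁ hp1)
    · exact Or.inr h
  have hd₂' : IsSpecialCenter G φ k t₂ ∨ IsSpecialCenter G φ (k+2) t₂ := by
    rcases hd₂ with h | h | h
    · exact Or.inl h
    · exact absurd h (hnk1 t₂ hp2)
    · exact Or.inr h
  have hd₃' : IsSpecialCenter G φ k t₃ ∨ IsSpecialCenter G φ (k+2) t₃ := by
    rcases hd₃ with h | h | h
    · exact Or.inl h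
    · exact absurd h (hnk1 t₃ hp3)
    · exact Or.inr h
  have hcollide : ∀ {j : ℕ} {s t : V}, n ≤ j → N₀ ≤ j → 1 ≤ j + c →
      IsSpecialCenter G φ j s → IsSpecialCenter G φ j t →
      ¬ BallEquiv G φ n s t → False := by
    intro j s t hj hj0 hj1 hs ht hst
    exact hst (be_mono hj (special_unique hconn hQS hj0 hj1 hs ht))
  have hkn : n ≤ k := by omega
  rcases hd₁' with h1 | h1 <;> rcases hd₂' with hh2 | hh2 <;> rcases hd₃' with hh3 | hh3
  · exact hcollide hkn (by omega) (by omega) h1 hh2 h12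
  · exact hcollide hkn (by omega) (by omega) h1 hh2 h12
  · exact hcollide hkn (by omega) (by omega) h1 hh3 h13
  · exact hcollide (by omega : n ≤ k+2) (by omega) (by omega) hh2 hh3 h23
  · exact hcollide hkn (by omega) (by omega) hh2 hh3 h23
  · exact hcollide (by omega : n ≤ k+2) (by omega) (by omega) h1 hh3 h13
  · exact hcollide (by omega : n ≤ k+2) (by omega) (by omega) h1 hh2 h12
  · exact hcollide (by omega : n ≤ k+2) (by omega) (by omega) h1 hh2 h12

end Aux

/-- If for some `n > N₀` the factor graph `𝒢ₙ` contains two distinct vertices each of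
degree at least three, then the quasi-Sturmian coloring is of bounded type. -/
theorem two_degree_three_implies_bounded_type {V A : Type*} (G : SimpleGraph V)
    [G.LocallyFinite] (φ : V → A) [Finite A] (d : ℕ) (hd : 2 ≤ d)
    (htree : G.IsTree) (hreg : ∀ v : V, G.degree v = d)
    (hsurj : Function.Surjective φ)
    (N₀ c : ℕ) (hQS : ∀ m, N₀ ≤ m → complexity G φ m = m + c)
    (n : ℕ) (hn : N₀ < n)
    (x y : V) (hxy : ¬ BallEquiv G φ n x y)
    (hx : ∃ a b e : V, WeakAdj G φ n x a ∧ WeakAdj G φ n x b ∧ WeakAdj G φ n x e ∧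
      ¬ BallEquiv G φ n a b ∧ ¬ BallEquiv G φ n a e ∧ ¬ BallEquiv G φ n b e ∧
      ¬ BallEquiv G φ n x a ∧ ¬ BallEquiv G φ n x b ∧ ¬ BallEquiv G φ n x e)
    (hy : ∃ a b e : V, WeakAdj G φ n y a ∧ WeakAdj G φ n y b ∧ WeakAdj G φ n y e ∧
      ¬ BallEquiv G φ n a b ∧ ¬ BallEquiv G φ n a e ∧ ¬ BallEquiv G φ n b e ∧
      ¬ BallEquiv G φ n y a ∧ ¬ BallEquiv G φ n y b ∧ ¬ BallEquiv G φ n y e) :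
    ∀ u : V, (typeSet G φ u).Finite := by
  by_contra hcon
  push_neg at hcon
  obtain ⟨u₀, hu₀⟩ := hcon
  have hconn : G.Connected := htree.isConnected
  have hall : ∀ v : V, ¬ (typeSet G φ v).Finite := by
    intro v hv
    exact hu₀ (finite_type_walk hconn hreg ((hconn.preconnected v u₀).some) hv)
  by_cases hsx : IsSpecialCenter G φ n x
  · by_cases hsy : IsSpecialCenter G φ n y
    · exact hxy (special_unique hconn hQS (le_of_lt hn) (by omega) hsx hsy)
    · exact main_aux hconn hreg hQS hn hall hsy hy
  · exact main_aux hconn hreg hQS hn hall hsx hx
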